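/- Let A be a commutative ring equipped with an ℕ-grading A = ⊕_{n∈ℕ} A_n, and suppose A is finitely generated as an algebra over its degree-zero subring A_0. Then there exists an integer m > 0 such that for every integer k > 0 the multiplication map from the k-fold product of A_m to A_{km} is surjective onto A_{km}; that is, the A_0-submodule A_{km} is spanned by products of k elements of A_m (equivalently, the k-th power of the submodule A_m equals A_{km} for all k > 0). -/

import Mathlib

open DirectSum Pointwise

section HuKeel

variable {A : Type*} [CommRing A] (𝒜 : ℕ → AddSubgroup A) [GradedRing 𝒜]

local notation "R𝒜" => SetLike.GradeZero.subring 𝒜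

/-- Products of homogeneous elements are homogeneous. -/
lemma HK.prod_mem (l : Multiset (A × ℕ)) (h : ∀ p ∈ l, p.1 ∈ 𝒜 p.2) :
    (l.map Prod.fst).prod ∈ 𝒜 (l.map Prod.snd).sum := by
  induction l using Multiset.induction with
  | empty => simpa using SetLike.GradedOne.one_mem
  | cons p l ih =>
    simp only [Multiset.map_cons, Multiset.prod_cons, Multiset.sum_cons]
    exact SetLike.mul_mem_graded (h p (Multiset.mem_cons_self p l))
      (ih fun q hq => h q (Multiset.mem_cons_of_mem hq))

/-- The set of monomials of degree `n` in the generators `G`. -/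
def HK.Mon (G : Finset (A × ℕ)) (n : ℕ) : Set A :=
  { x | ∃ l : Multiset (A × ℕ), (∀ p ∈ l, p ∈ G) ∧ (l.map Prod.snd).sum = n ∧
      (l.map Prod.fst).prod = x }

lemma HK.one_mem_Mon (G : Finset (A × ℕ)) : (1 : A) ∈ HK.Mon G 0 :=
  ⟨0, by simp, by simp, by simp⟩

lemma HK.Mon_mul (G : Finset (A × ℕ)) (i j : ℕ) :
    HK.Mon G i * HK.Mon G j ⊆ HK.Mon G (i + j) := by
  rintro z ⟨x, ⟨l₁, hl₁, d₁, p₁⟩, y, ⟨l₂, hl₂, d₂, p₂⟩, rfl⟩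
  refine ⟨l₁ + l₂, ?_, ?_, ?_⟩
  · intro p hp; rcases Multiset.mem_add.1 hp with h | h
    · exact hl₁ p h
    · exact hl₂ p h
  · simp [d₁, d₂]
  · simp [p₁, p₂]

lemma HK.span_Mon_mul_le (G : Finset (A × ℕ)) (i j : ℕ) :
    Submodule.span R𝒜 (HK.Mon G i) * Submodule.span R𝒜 (HK.Mon G j) ≤
      Submodule.span R𝒜 (HK.Mon G (i + j)) := by
  rw [Submodule.span_mul_span]
  exact Submodule.span_mono (HK.Mon_mul G i j)

/-- Every homogeneous piece is spanned (over the degree-zero subring) by monomials of the same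
degree in finitely many positive-degree homogeneous generators. -/
lemma HK.exists_generators (hfg : Algebra.FiniteType R𝒜 A) :
    ∃ G : Finset (A × ℕ), (∀ p ∈ G, p.1 ∈ 𝒜 p.2 ∧ 0 < p.2) ∧
      ∀ n : ℕ, (𝒜 n : Set A) ⊆ Submodule.span R𝒜 (HK.Mon G n) := by
  classical
  obtain ⟨S, hS⟩ := hfg
  set G : Finset (A × ℕ) :=
    (S.biUnion fun x => (DirectSum.decompose 𝒜 x).support.image
      fun i => (((DirectSum.decompose 𝒜 x) i : A), i)).filter (fun p => 0 < p.2) with hG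
  have hGprop : ∀ p ∈ G, p.1 ∈ 𝒜 p.2 ∧ 0 < p.2 := by
    intro p hp
    rw [hG, Finset.mem_filter] at hp
    obtain ⟨hp1, hp2⟩ := hp
    refine ⟨?_, hp2⟩
    obtain ⟨x, _, hx⟩ := Finset.mem_biUnion.1 hp1
    obtain ⟨i, _, hi⟩ := Finset.mem_image.1 hx
    rw [← hi]
    exact SetLike.coe_mem _
  refine ⟨G, hGprop, ?_⟩
  have key : ∀ a : A, ∀ n : ℕ,
      ((DirectSum.decompose 𝒜 a n : 𝒜 n) : A) ∈ Submodule.span R𝒜 (HK.Mon G n) := by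
    have htop : ∀ a : A, a ∈ Algebra.adjoin R𝒜 (S : Set A) := by
      intro a; rw [hS]; trivial
    intro a
    induction htop a using Algebra.adjoin_induction with
    | mem x hx =>
      intro n
      rcases Nat.eq_zero_or_pos n with rfl | hn
      · -- degree zero component lies in R𝒜
        have h0 : ((DirectSum.decompose 𝒜 x 0 : 𝒜 0) : A) ∈ 𝒜 0 := SetLike.coe_mem _
        have : ((DirectSum.decompose 𝒜 x 0 : 𝒜 0) : A) =
            (⟨_, h0⟩ : R𝒜) • (1 : A) := by
          rw [Algebra.smul_def]; simp [Subalgebra.algebraMap_eq]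
          rfl
        rw [this]
        exact Submodule.smul_mem _ _ (Submodule.subset_span (HK.one_mem_Mon G))
      · by_cases hz : ((DirectSum.decompose 𝒜 x n : 𝒜 n) : A) = 0
        · rw [hz]; exact Submodule.zero_mem _
        · have hsupp : n ∈ (DirectSum.decompose 𝒜 x).support := by
            rw [DFinsupp.mem_support_iff]
            intro h; apply hz; rw [h]; rfl
          have hmem : (((DirectSum.decompose 𝒜 x n : 𝒜 n) : A), n) ∈ G := by
            rw [hG, Finset.mem_filter]
            refine ⟨Finset.mem_biUnion.2 ⟨x, hx, Finset.mem_image.2 ⟨n, hsupp, rfl⟩⟩, hn⟩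
          refine Submodule.subset_span ⟨{(((DirectSum.decompose 𝒜 x n : 𝒜 n) : A), n)}, ?_, by simp, by simp⟩
          intro p hp; rw [Multiset.mem_singleton] at hp; rw [hp]; exact hmem
    | algebraMap r =>
      intro n
      have hr : ((r : A)) ∈ 𝒜 0 := r.2
      have hcoe : (algebraMap (↥R𝒜) A) r = (r : A) := rfl
      rw [hcoe]
      rcases Nat.eq_zero_or_pos n with rfl | hn
      · rw [DirectSum.decompose_of_mem_same 𝒜 hr]
        have : (r : A) = r • (1 : A) := by
          rw [Algebra.smul_def]; simp [Subalgebra.algebraMap_eq]; rfl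
        rw [this]
        exact Submodule.smul_mem _ _ (Submodule.subset_span (HK.one_mem_Mon G))
      · rw [DirectSum.decompose_of_mem_ne 𝒜 hr (Nat.pos_iff_ne_zero.1 hn).symm]
        exact Submodule.zero_mem _
    | add x y hx hy ihx ihy =>
      intro n
      rw [DirectSum.decompose_add, DirectSum.add_apply, AddMemClass.coe_add]
      exact Submodule.add_mem _ (ihx n) (ihy n)
    | mul x y hx hy ihx ihy =>
      intro n
      rw [DirectSum.decompose_mul, DirectSum.coe_mul_apply]
      refine Submodule.sum_mem _ ?_
      rintro ⟨i, j⟩ hij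
      rw [Finset.mem_filter] at hij
      have : i + j = n := hij.2
      rw [← this]
      exact HK.span_Mon_mul_le 𝒜 G i j (Submodule.mul_mem_mul (ihx i) (ihy j))
  intro n a ha
  have := key a n
  rwa [DirectSum.decompose_of_mem_same 𝒜 ha] at this


/-- Pigeonhole: a multiset over `G` of large total degree contains some pair with high
multiplicity. -/
lemma HK.pigeon (G : Finset (A × ℕ)) (d : ℕ)
    (hd : ∀ p ∈ G, p.2 ∣ d ∧ 0 < p.2)
    (l : Multiset (A × ℕ)) (hl : ∀ p ∈ l, p ∈ G)
    (hsum : G.card * (d - 1) < (l.map Prod.snd).sum) :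
    ∃ p ∈ l, Multiset.replicate (d / p.2) p ≤ l := by
  classical
  by_contra h
  push_neg at h
  have h : ∀ p ∈ l, l.count p < d / p.2 := by
    intro p hp
    have := h p hp
    by_contra hc
    exact this ((Multiset.le_count_iff_replicate_le).1 (by omega))
  have hbound : (l.map Prod.snd).sum ≤ G.card * (d - 1) := by
    rw [Finset.sum_multiset_map_count]
    have h1 : ∀ p ∈ l.toFinset, l.count p • p.2 ≤ d - 1 := by
      intro p hp
      have hpl : p ∈ l := Multiset.mem_toFinset.1 hp
      have hcount : l.count p ≤ d / p.2 - 1 := by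
        have := h p hpl; omega
      have hdvd := (hd p (hl p hpl)).1
      have hpos := (hd p (hl p hpl)).2
      have hdm : d / p.2 * p.2 = d := Nat.div_mul_cancel hdvd
      have : l.count p • p.2 ≤ (d / p.2 - 1) * p.2 := by
        rw [smul_eq_mul]; exact Nat.mul_le_mul_right _ hcount
      have h2 : (d / p.2 - 1) * p.2 = d - p.2 := by
        rw [Nat.sub_mul, hdm, one_mul]
      omega
    calc ∑ p ∈ l.toFinset, l.count p • p.2 ≤ ∑ _p ∈ l.toFinset, (d - 1) :=
          Finset.sum_le_sum h1
      _ = l.toFinset.card * (d - 1) := by rw [Finset.sum_const, smul_eq_mul]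
      _ ≤ G.card * (d - 1) := by
          apply Nat.mul_le_mul_right
          apply Finset.card_le_card
          intro p hp
          exact hl p (Multiset.mem_toFinset.1 hp)
  omega

/-- From a multiset of large total degree, extract a sub-multiset of degree exactly `j * d`. -/
lemma HK.extract (G : Finset (A × ℕ)) (d : ℕ) (hdpos : 0 < d)
    (hd : ∀ p ∈ G, p.2 ∣ d ∧ 0 < p.2) (j : ℕ) :
    ∀ l : Multiset (A × ℕ), (∀ p ∈ l, p ∈ G) →
      j * d + G.card * (d - 1) < (l.map Prod.snd).sum + 1 →
      ∃ b ≤ l, (b.map Prod.snd).sum = j * d := by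
  induction j with
  | zero => intro l _ _; exact ⟨0, zero_le, by simp⟩
  | succ j ih =>
    classical
    intro l hl hsum
    have hexp : (j + 1) * d = j * d + d := by ring
    obtain ⟨p, hpl, hb₁le⟩ := HK.pigeon G d hd l hl (by omega)
    have hdvd := (hd p (hl p hpl)).1
    have hppos := (hd p (hl p hpl)).2
    set b₁ : Multiset (A × ℕ) := Multiset.replicate (d / p.2) p with hb₁
    have hb₁sum : (b₁.map Prod.snd).sum = d := by
      rw [hb₁, Multiset.map_replicate, Multiset.sum_replicate, smul_eq_mul,
        Nat.div_mul_cancel hdvd]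
    have hsub : ∀ q ∈ l - b₁, q ∈ G := fun q hq => hl q (Multiset.mem_of_le (tsub_le_self) hq)
    have hsumsub : ((l - b₁).map Prod.snd).sum = (l.map Prod.snd).sum - d := by
      have : l = (l - b₁) + b₁ := by
        rw [tsub_add_cancel_of_le hb₁le]
      conv_rhs => rw [this]
      rw [Multiset.map_add, Multiset.sum_add, hb₁sum]
      omega
    obtain ⟨b', hb'le, hb'sum⟩ := ih (l - b₁) hsub (by
      rw [hsumsub]
      have hdle : d ≤ (l.map Prod.snd).sum := by omega
      omega)
    refine ⟨b₁ + b', ?_, ?_⟩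
    · rw [← tsub_add_cancel_of_le hb₁le, add_comm b₁ b']
      exact add_le_add_left hb'le b₁
    · rw [Multiset.map_add, Multiset.sum_add, hb₁sum, hb'sum]
      ring


lemma HK.easy_mul (a b : ℕ) :
    Submodule.span R𝒜 (𝒜 a : Set A) * Submodule.span R𝒜 (𝒜 b : Set A) ≤
      Submodule.span R𝒜 (𝒜 (a + b) : Set A) := by
  rw [Submodule.span_mul_span]
  apply Submodule.span_mono
  rintro z ⟨x, hx, y, hy, rfl⟩
  exact SetLike.mul_mem_graded hx hy

lemma HK.main (G : Finset (A × ℕ)) (hG : ∀ p ∈ G, p.1 ∈ 𝒜 p.2 ∧ 0 < p.2)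
    (hgen : ∀ n : ℕ, (𝒜 n : Set A) ⊆ Submodule.span R𝒜 (HK.Mon G n)) :
    ∃ m : ℕ, 0 < m ∧ ∀ n : ℕ, 2 * m ≤ n →
      Submodule.span R𝒜 (𝒜 n : Set A) ≤
        Submodule.span R𝒜 (𝒜 m : Set A) * Submodule.span R𝒜 (𝒜 (n - m) : Set A) := by
  classical
  set d := G.lcm Prod.snd with hdd
  have hd : ∀ p ∈ G, p.2 ∣ d ∧ 0 < p.2 := fun p hp => ⟨Finset.dvd_lcm hp, (hG p hp).2⟩
  have hdpos : 0 < d := by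
    rw [Nat.pos_iff_ne_zero]
    intro h
    rw [hdd, Finset.lcm_eq_zero_iff] at h
    obtain ⟨p, hp, hp0⟩ := h
    have := (hG p hp).2
    omega
  set m := (G.card + 1) * d with hm
  have hmpos : 0 < m := by positivity
  refine ⟨m, hmpos, ?_⟩
  intro n hn
  have hmon : HK.Mon G n ⊆ (𝒜 m : Set A) * (𝒜 (n - m) : Set A) := by
    rintro x ⟨l, hl, hdeg, hprod⟩
    have key : (G.card + 1) * d + G.card * (d - 1) ≤ 2 * m := by
      have h1 : G.card * (d - 1) ≤ G.card * d := Nat.mul_le_mul_left _ (Nat.sub_le d 1)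
      have h2 : G.card * d ≤ (G.card + 1) * d := Nat.mul_le_mul_right _ (by omega)
      have h3 : 2 * m = (G.card + 1) * d + (G.card + 1) * d := by rw [hm]; ring
      omega
    obtain ⟨b, hble, hbsum⟩ := HK.extract G d hdpos hd (G.card + 1) l hl (by
      rw [hdeg]; omega)
    have hbG : ∀ p ∈ b, p ∈ G := fun p hp => hl p (Multiset.mem_of_le hble hp)
    have hcG : ∀ p ∈ l - b, p ∈ G := fun p hp => hl p (Multiset.mem_of_le tsub_le_self hp)
    have hsplit : b + (l - b) = l := add_tsub_cancel_of_le hble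
    have hcsum : ((l - b).map Prod.snd).sum = n - m := by
      have := congrArg (fun t : Multiset (A × ℕ) => (t.map Prod.snd).sum) hsplit
      simp only [Multiset.map_add, Multiset.sum_add] at this
      rw [hbsum, ← hm] at this
      omega
    have hxeq : x = (b.map Prod.fst).prod * ((l - b).map Prod.fst).prod := by
      rw [← hprod, ← hsplit]
      simp [Multiset.map_add]
    have h1 : (b.map Prod.fst).prod ∈ 𝒜 m := by
      have := HK.prod_mem 𝒜 b fun p hp => (hG p (hbG p hp)).1
      rwa [hbsum, ← hm] at this
    have h2 : ((l - b).map Prod.fst).prod ∈ 𝒜 (n - m) := by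
      have := HK.prod_mem 𝒜 (l - b) fun p hp => (hG p (hcG p hp)).1
      rwa [hcsum] at this
    rw [hxeq]
    exact Set.mul_mem_mul h1 h2
  calc Submodule.span R𝒜 (𝒜 n : Set A) ≤ Submodule.span R𝒜 (HK.Mon G n) :=
        Submodule.span_le.2 (hgen n)
    _ ≤ Submodule.span R𝒜 ((𝒜 m : Set A) * (𝒜 (n - m) : Set A)) := Submodule.span_mono hmon
    _ = _ := (Submodule.span_mul_span _ _ _).symm

end HuKeel

/-- **Lemma 1.5** of Hu–Keel, "Mori Dream Spaces and GIT".
Let `A` be a commutative ring with an `ℕ`-grading `A = ⊕ₙ Aₙ`, finitely generated as an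
algebra over its degree-zero subring `A₀`.  Then there is an `m > 0` such that for all `k > 0`
the multiplication map `Symᵏ A_m → A_{km}` is surjective, i.e. the `A₀`-submodule of `A`
spanned by `A_m`, raised to the `k`-th power, equals the `A₀`-submodule spanned by `A_{km}`. -/
theorem graded_ring_power_of_piece_eventually_surjective
    {A : Type*} [CommRing A] (𝒜 : ℕ → AddSubgroup A) [GradedRing 𝒜]
    (hfg : Algebra.FiniteType (SetLike.GradeZero.subring 𝒜) A) :
    ∃ m : ℕ, 0 < m ∧ ∀ k : ℕ, 0 < k →
      (Submodule.span (SetLike.GradeZero.subring 𝒜) (𝒜 m : Set A)) ^ k =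
        Submodule.span (SetLike.GradeZero.subring 𝒜) (𝒜 (k * m) : Set A) := by
  obtain ⟨G, hG, hgen⟩ := HK.exists_generators 𝒜 hfg
  obtain ⟨m, hm, hmain⟩ := HK.main 𝒜 G hG hgen
  refine ⟨m, hm, ?_⟩
  intro k hk
  induction k with
  | zero => omega
  | succ k ih =>
    rcases Nat.eq_zero_or_pos k with rfl | hk'
    · rw [pow_one]; norm_num
    · rw [pow_succ, ih hk']
      apply le_antisymm
      · have := HK.easy_mul 𝒜 (k * m) m
        rwa [show k * m + m = (k + 1) * m by ring] at this
      · have h2m : 2 * m ≤ (k + 1) * m := Nat.mul_le_mul_right m (by omega)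
        have h := hmain ((k + 1) * m) h2m
        rw [show (k + 1) * m - m = k * m by rw [Nat.add_mul]; omega] at h
        exact h.trans (le_of_eq (mul_comm _ _))
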